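/- Consider a Markov chain on states S_0, S_1, …, S_m whose transition probabilities satisfy, as ε → 0+: P(S_0 → S_0) = 1 − Nε + o(ε), P(S_0 → S_1) = Nε + o(ε), P(S_0 → other) = o(ε); and P(S_i → S_{i−1}) = 1 − o(1) for each i ≥ 1 (uniformly as ε → 0). Then the stationary probabilities satisfy P_0 = 1 − Nε + o(ε), P_1 = Nε + o(ε), and P_i = o(ε) for i ≥ 2. -/

import Mathlib

open Filter Topology Asymptotics Finset
open Filter Topology Asymptotics
set_option maxHeartbeats 1000000

private lemma entry_le_one {m : ℕ} (p : Fin (m+1) → Fin (m+1) → ℝ)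
    (hp : ∀ j, 0 ≤ p 0 j) (hps : ∑ j, p 0 j = 1) (j : Fin (m+1)) : p 0 j ≤ 1 := by
  rw [← hps]
  exact Finset.single_le_sum (fun i _ => hp i) (mem_univ j)

private lemma row_split {m : ℕ} (p : Fin (m+1) → ℝ)
    (hps : ∑ j, p j = 1) (a : Fin (m+1)) :
    ∑ j ∈ univ.erase a, p j = 1 - p a := by
  have := Finset.sum_erase_add univ p (mem_univ a)
  linarith

private lemma entry_le_of_ne {m : ℕ} (p : Fin (m+1) → ℝ)
    (hp : ∀ j, 0 ≤ p j) (hps : ∑ j, p j = 1) {a j : Fin (m+1)} (h : j ≠ a) :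
    p j ≤ 1 - p a := by
  rw [← row_split p hps a]
  exact Finset.single_le_sum (fun i _ => hp i) (mem_erase.2 ⟨h, mem_univ j⟩)

private lemma drift_bound {m : ℕ} (hm : 1 ≤ m) (q : Fin (m+1) → ℝ) (p : Fin (m+1) → Fin (m+1) → ℝ)
    (hq : ∀ i, 0 ≤ q i) (hqs : ∑ i, q i = 1)
    (hp : ∀ i j, 0 ≤ p i j) (hps : ∀ i, ∑ j, p i j = 1)
    (hst : ∀ j, ∑ i, q i * p i j = q j)
    (hdn : ∀ k : Fin (m+1), k ≠ 0 → 1 - p k (k-1) ≤ 1/(2*m)) :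
    ∑ k ∈ Finset.univ.erase 0, q k ≤ 2*m*(1 - p 0 0) := by
  have hm' : (1:ℝ) ≤ m := by exact_mod_cast hm
  set T := ∑ k ∈ Finset.univ.erase (0 : Fin (m+1)), q k with hT
  set S1 := ∑ j : Fin (m+1), q j * (j : ℕ) with hS1
  -- key identity
  have key : ∑ i : Fin (m+1), q i * (∑ j : Fin (m+1), p i j * (j:ℕ)) = S1 := by
    rw [hS1]
    calc ∑ i : Fin (m+1), q i * (∑ j : Fin (m+1), p i j * (j:ℕ))
        = ∑ i : Fin (m+1), ∑ j : Fin (m+1), q i * p i j * (j:ℕ) := by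
          refine Finset.sum_congr rfl fun i _ => ?_
          rw [Finset.mul_sum]; exact Finset.sum_congr rfl fun j _ => by ring
      _ = ∑ j : Fin (m+1), ∑ i : Fin (m+1), q i * p i j * (j:ℕ) := Finset.sum_comm
      _ = ∑ j : Fin (m+1), q j * (j:ℕ) := by
          refine Finset.sum_congr rfl fun j _ => ?_
          rw [← Finset.sum_mul, hst j]
  -- bound for row 0
  have b0 : ∑ j : Fin (m+1), p 0 j * ((j:ℕ):ℝ) ≤ m * (1 - p 0 0) := by
    rw [← Finset.sum_erase_add univ _ (mem_univ (0 : Fin (m+1)))]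
    simp only [Fin.val_zero, Nat.cast_zero, mul_zero, add_zero]
    calc ∑ j ∈ univ.erase (0:Fin (m+1)), p 0 j * ((j:ℕ):ℝ)
        ≤ ∑ j ∈ univ.erase (0:Fin (m+1)), p 0 j * m := by
          refine Finset.sum_le_sum fun j _ => ?_
          exact mul_le_mul_of_nonneg_left (by exact_mod_cast Nat.cast_le.2 (Fin.is_le j)) (hp 0 j)
      _ = m * (1 - p 0 0) := by rw [← Finset.sum_mul, row_split _ (hps 0)]; ring
  -- bound for rows i ≠ 0
  have bi : ∀ i : Fin (m+1), i ≠ 0 →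
      ∑ j : Fin (m+1), p i j * ((j:ℕ):ℝ) ≤ ((i:ℕ):ℝ) - 1 + 1/2 := by
    intro i hi
    have hival : 1 ≤ (i:ℕ) := Nat.one_le_iff_ne_zero.2 (by
      exact fun h => hi (Fin.ext (by rw [h, Fin.val_zero])))
    have hsub : (((i - 1 : Fin (m+1)) : ℕ) : ℝ) = ((i:ℕ):ℝ) - 1 := by
      rw [Fin.coe_sub_one, if_neg hi]
      push_cast [Nat.cast_sub hival]; ring
    rw [← Finset.sum_erase_add univ _ (mem_univ (i - 1 : Fin (m+1)))]
    have h1 : p i (i-1) * (((i-1 : Fin (m+1)):ℕ):ℝ) ≤ ((i:ℕ):ℝ) - 1 := by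
      rw [hsub]
      have : p i (i-1) ≤ 1 := entry_le_one (fun a b => p (i) b) (hp i) (hps i) _
      nlinarith [hp i (i-1), (by exact_mod_cast hival : (1:ℝ) ≤ ((i:ℕ):ℝ))]
    have h2 : ∑ j ∈ univ.erase (i-1 : Fin (m+1)), p i j * ((j:ℕ):ℝ) ≤ 1/2 := by
      calc ∑ j ∈ univ.erase (i-1 : Fin (m+1)), p i j * ((j:ℕ):ℝ)
          ≤ ∑ j ∈ univ.erase (i-1 : Fin (m+1)), p i j * m := by
            refine Finset.sum_le_sum fun j _ => ?_
            exact mul_le_mul_of_nonneg_left (by exact_mod_cast Nat.cast_le.2 (Fin.is_le j)) (hp i j)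
        _ = (1 - p i (i-1)) * m := by rw [← Finset.sum_mul, row_split _ (hps i)]
        _ ≤ (1/(2*m)) * m := by
            apply mul_le_mul_of_nonneg_right (hdn i hi) (by linarith)
        _ = 1/2 := by field_simp
    linarith
  -- combine
  have main : S1 ≤ q 0 * (m * (1 - p 0 0)) + ∑ i ∈ univ.erase (0:Fin (m+1)), q i * (((i:ℕ):ℝ) - 1 + 1/2) := by
    rw [← key, ← Finset.sum_erase_add univ _ (mem_univ (0 : Fin (m+1)))]
    have := Finset.sum_le_sum (s := univ.erase (0:Fin (m+1)))
      (fun i hi => mul_le_mul_of_nonneg_left (bi i (mem_erase.1 hi).1) (hq i))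
    have h0 := mul_le_mul_of_nonneg_left b0 (hq 0)
    linarith
  have hS1eq : S1 = ∑ i ∈ univ.erase (0:Fin (m+1)), q i * ((i:ℕ):ℝ) := by
    rw [hS1, ← Finset.sum_erase_add univ _ (mem_univ (0 : Fin (m+1)))]
    simp
  have hsplit : ∑ i ∈ univ.erase (0:Fin (m+1)), q i * (((i:ℕ):ℝ) - 1 + 1/2)
      = S1 - T/2 := by
    rw [hS1eq, hT]
    calc ∑ i ∈ univ.erase (0:Fin (m+1)), q i * (((i:ℕ):ℝ) - 1 + 1/2)
        = ∑ i ∈ univ.erase (0:Fin (m+1)), (q i * ((i:ℕ):ℝ) - q i * (1/2)) :=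
          Finset.sum_congr rfl fun i _ => by ring
      _ = ∑ i ∈ univ.erase (0:Fin (m+1)), q i * ((i:ℕ):ℝ)
          - (∑ i ∈ univ.erase (0:Fin (m+1)), q i) * (1/2) := by
          rw [Finset.sum_sub_distrib, Finset.sum_mul]
      _ = _ := by ring
  have hq0le : q 0 ≤ 1 := by
    rw [← hqs]; exact Finset.single_le_sum (fun i _ => hq i) (mem_univ 0)
  have hp00 : p 0 0 ≤ 1 := entry_le_one p (hp 0) (hps 0) 0
  have hq00 : 0 ≤ q 0 := hq 0
  have hfin : q 0 * (↑m * (1 - p 0 0)) ≤ ↑m * (1 - p 0 0) :=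
    mul_le_of_le_one_left (by nlinarith) hq0le
  linarith

private lemma col_bound {m : ℕ} (q : Fin (m+1) → ℝ) (p : Fin (m+1) → Fin (m+1) → ℝ)
    (hq : ∀ i, 0 ≤ q i) (hqs : ∑ i, q i = 1)
    (hp : ∀ i j, 0 ≤ p i j) (hps : ∀ i, ∑ j, p i j = 1)
    (hst : ∀ j, ∑ i, q i * p i j = q j)
    {δ : ℝ} (hδ : 0 ≤ δ) (hdn : ∀ k : Fin (m+1), k ≠ 0 → 1 - p k (k-1) ≤ δ)
    (i : Fin (m+1)) (hi : i ≠ 0) :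
    q i ≤ p 0 i + (if i + 1 = 0 then 0 else q (i+1))
      + δ * ∑ k ∈ Finset.univ.erase (0:Fin (m+1)), q k := by
  have hq0le : q 0 ≤ 1 := by
    rw [← hqs]; exact Finset.single_le_sum (fun k _ => hq k) (mem_univ 0)
  have hrec : ∑ k ∈ univ.erase (0:Fin (m+1)), q k * p k i + q 0 * p 0 i = q i := by
    rw [Finset.sum_erase_add univ _ (mem_univ (0 : Fin (m+1))), hst i]
  have h0term : q 0 * p 0 i ≤ p 0 i := mul_le_of_le_one_left (hp 0 i) hq0le
  have hsmall : ∀ k : Fin (m+1), k ≠ 0 → k ≠ i + 1 → p k i ≤ δ := by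
    intro k hk0 hki
    have hne : i ≠ k - 1 := fun h => hki (by rw [h]; exact (sub_add_cancel k 1).symm)
    exact le_trans (entry_le_of_ne (p k) (hp k) (hps k) hne) (hdn k hk0)
  have hrest : ∑ k ∈ (univ.erase (0:Fin (m+1))).erase (i+1), q k * p k i
      ≤ δ * ∑ k ∈ univ.erase (0:Fin (m+1)), q k := by
    calc ∑ k ∈ (univ.erase (0:Fin (m+1))).erase (i+1), q k * p k i
        ≤ ∑ k ∈ (univ.erase (0:Fin (m+1))).erase (i+1), q k * δ := by
          refine Finset.sum_le_sum fun k hk => ?_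
          have hk' := Finset.mem_erase.1 hk
          have hk'' := Finset.mem_erase.1 hk'.2
          exact mul_le_mul_of_nonneg_left (hsmall k hk''.1 hk'.1) (hq k)
      _ ≤ ∑ k ∈ univ.erase (0:Fin (m+1)), q k * δ :=
          Finset.sum_le_sum_of_subset_of_nonneg (Finset.erase_subset _ _)
            (fun k _ _ => mul_nonneg (hq k) hδ)
      _ = δ * ∑ k ∈ univ.erase (0:Fin (m+1)), q k := by rw [← Finset.sum_mul]; ring
  by_cases hlast : i + 1 = 0
  · rw [if_pos hlast]
    have : ((univ.erase (0:Fin (m+1))).erase (i+1)) = univ.erase (0:Fin (m+1)) := by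
      rw [hlast, Finset.erase_idem]
    rw [this] at hrest
    linarith
  · rw [if_neg hlast]
    have hmem : i + 1 ∈ univ.erase (0:Fin (m+1)) := Finset.mem_erase.2 ⟨hlast, mem_univ _⟩
    have hsplit := Finset.sum_erase_add (univ.erase (0:Fin (m+1)))
      (fun k => q k * p k i) hmem
    beta_reduce at hsplit
    have hterm : q (i+1) * p (i+1) i ≤ q (i+1) :=
      mul_le_of_le_one_right (hq (i+1)) (entry_le_one (fun _ b => p (i+1) b) (hp (i+1)) (hps (i+1)) i)
    linarith

theorem stationary_asymptotics (N m : ℕ) (hN : 1 ≤ N) (hm : 1 ≤ m)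
    (ε0 : ℝ) (hε0 : 0 < ε0)
    (P : ℝ → Fin (m + 1) → Fin (m + 1) → ℝ) (q : ℝ → Fin (m + 1) → ℝ)
    (hP : ∀ ε ∈ Set.Ioo (0 : ℝ) ε0, (∀ i j, 0 ≤ P ε i j) ∧ ∀ i, ∑ j, P ε i j = 1)
    (hirr : ∀ ε ∈ Set.Ioo (0 : ℝ) ε0, ∀ i j : Fin (m + 1), ∃ n : ℕ,
      0 < (Matrix.of (P ε) ^ n) i j)
    (hstat : ∀ ε ∈ Set.Ioo (0 : ℝ) ε0,
      (∀ i, 0 ≤ q ε i) ∧ (∑ i, q ε i = 1) ∧ ∀ j, ∑ i, q ε i * P ε i j = q ε j)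
    (h00 : (fun ε => P ε 0 0 - (1 - N * ε)) =o[𝓝[>] (0 : ℝ)] fun ε => ε)
    (h01 : (fun ε => P ε 0 1 - N * ε) =o[𝓝[>] (0 : ℝ)] fun ε => ε)
    (h0j : ∀ j : Fin (m + 1), 2 ≤ (j : ℕ) →
      (fun ε => P ε 0 j) =o[𝓝[>] (0 : ℝ)] fun ε => ε)
    (hdown : ∀ i : Fin (m + 1), i ≠ 0 →
      Tendsto (fun ε => P ε i (i - 1)) (𝓝[>] (0 : ℝ)) (𝓝 1)) :
    ((fun ε => q ε 0 - (1 - N * ε)) =o[𝓝[>] (0 : ℝ)] fun ε => ε) ∧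
    ((fun ε => q ε 1 - N * ε) =o[𝓝[>] (0 : ℝ)] fun ε => ε) ∧
    ∀ i : Fin (m + 1), 2 ≤ (i : ℕ) →
      (fun ε => q ε i) =o[𝓝[>] (0 : ℝ)] fun ε => ε := by
  set l := 𝓝[>] (0:ℝ) with hl
  have hmem : ∀ᶠ ε in l, ε ∈ Set.Ioo (0:ℝ) ε0 := Ioo_mem_nhdsGT_of_mem ⟨le_refl 0, hε0⟩
  have hpos : ∀ᶠ ε in l, 0 < ε := eventually_mem_nhdsWithin
  have hsmallε : ∀ a : ℝ, 0 < a → ∀ᶠ ε in l, ε < a := fun a ha =>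
    (eventually_lt_nhds ha).filter_mono nhdsWithin_le_nhds
  have hm' : (1:ℝ) ≤ (m:ℝ) := by exact_mod_cast hm
  have hN' : (1:ℝ) ≤ (N:ℝ) := by exact_mod_cast hN
  set C : ℝ := 2*(m:ℝ)*((N:ℝ)+1) with hCdef
  have hC : 0 < C := by nlinarith
  have hdownall : ∀ δ : ℝ, 0 < δ →
      ∀ᶠ ε in l, ∀ k : Fin (m+1), k ≠ 0 → 1 - P ε k (k-1) ≤ δ := by
    intro δ hδ
    refine eventually_all.2 fun k => ?_
    by_cases hk : k = 0
    · exact Eventually.of_forall fun ε h => absurd hk h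
    · have := (hdown k hk).eventually (eventually_gt_nhds (by linarith : (1:ℝ) - δ < 1))
      exact this.mono fun ε h _ => by linarith
  -- eventual bound 1 - P00 ≤ (N+1) ε
  have h00' : ∀ᶠ ε in l, 1 - P ε 0 0 ≤ ((N:ℝ)+1)*ε := by
    filter_upwards [isLittleO_iff.1 h00 one_pos, hpos] with ε h1 h2
    rw [Real.norm_eq_abs, Real.norm_eq_abs, abs_of_pos h2, one_mul] at h1
    have := (abs_le.1 h1).1
    nlinarith
  have h01b : ∀ᶠ ε in l, P ε 0 1 ≤ ((N:ℝ)+1)*ε := by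
    filter_upwards [isLittleO_iff.1 h01 one_pos, hpos] with ε h1 h2
    rw [Real.norm_eq_abs, Real.norm_eq_abs, abs_of_pos h2, one_mul] at h1
    have := (abs_le.1 h1).2
    nlinarith
  -- big-O bound on the tail mass
  have hTb : ∀ᶠ ε in l, ∑ k ∈ Finset.univ.erase (0:Fin (m+1)), q ε k ≤ C * ε := by
    have hδ : (0:ℝ) < 1/(2*(m:ℝ)) := by positivity
    filter_upwards [hmem, hdownall _ hδ, h00', hpos] with ε hε hdn h0 hp
    have hPε := hP ε hε
    have hqε := hstat ε hε
    have hdb := drift_bound hm (q ε) (P ε) hqε.1 hqε.2.1 hPε.1 hPε.2 hqε.2.2 hdn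
    have : 2*(m:ℝ)*(1 - P ε 0 0) ≤ 2*(m:ℝ)*(((N:ℝ)+1)*ε) := by nlinarith
    calc ∑ k ∈ Finset.univ.erase (0:Fin (m+1)), q ε k ≤ 2*(m:ℝ)*(1 - P ε 0 0) := hdb
      _ ≤ C * ε := by rw [hCdef]; nlinarith
  have hTnn : ∀ᶠ ε in l, 0 ≤ ∑ k ∈ Finset.univ.erase (0:Fin (m+1)), q ε k :=
    hmem.mono fun ε hε => Finset.sum_nonneg fun k _ => (hstat ε hε).1 k
  -- generic little-o maker for states i ≠ 0
  have key2 : ∀ i : Fin (m+1), i ≠ 0 → ∀ Q : ℝ → ℝ,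
      (∀ᶠ ε in l, (if i + 1 = 0 then (0:ℝ) else q ε (i+1)) ≤ Q ε) →
      (Q =o[l] fun ε => ε) →
      ((fun ε => P ε 0 i) =o[l] fun ε => ε) →
      (fun ε => q ε i) =o[l] fun ε => ε := by
    intro i hi Q hQle hQo hPo
    rw [isLittleO_iff]
    intro c hc
    have hc3 : 0 < c/3 := by linarith
    have hδ : 0 < c/(3*(C+1)) := by positivity
    filter_upwards [hmem, hpos, hTb, hTnn, hQle,
      isLittleO_iff.1 hQo hc3, isLittleO_iff.1 hPo hc3, hdownall _ hδ]
      with ε hε hp hT hTn hQ hQ2 hP2 hdn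
    have hPε := hP ε hε
    have hqε := hstat ε hε
    have hcb := col_bound (q ε) (P ε) hqε.1 hqε.2.1 hPε.1 hPε.2 hqε.2.2
      (le_of_lt hδ) hdn i hi
    rw [Real.norm_eq_abs, Real.norm_eq_abs, abs_of_pos hp, abs_of_nonneg (hqε.1 i)]
    rw [Real.norm_eq_abs, Real.norm_eq_abs, abs_of_pos hp] at hQ2 hP2
    have h1 : P ε 0 i ≤ (c/3)*ε := le_trans (le_abs_self _) hP2
    have h2 : (if i + 1 = 0 then (0:ℝ) else q ε (i+1)) ≤ (c/3)*ε :=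
      le_trans hQ (le_trans (le_abs_self _) hQ2)
    have h3 : (c/(3*(C+1))) * (∑ k ∈ Finset.univ.erase (0:Fin (m+1)), q ε k) ≤ (c/3)*ε := by
      have hd1 : (c/(3*(C+1))) * (∑ k ∈ Finset.univ.erase (0:Fin (m+1)), q ε k)
          ≤ (c/(3*(C+1))) * (C*ε) := by
        apply mul_le_mul_of_nonneg_left hT (le_of_lt hδ)
      have : (c/(3*(C+1))) * (C*ε) ≤ (c/3)*ε := by
        rw [div_mul_eq_mul_div, div_le_iff₀ (by positivity)]
        nlinarith
      linarith
    linarith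
  -- downward induction for states with (i:ℕ) ≥ 2
  have haux : ∀ d : ℕ, ∀ i : Fin (m+1), m ≤ (i:ℕ) + d → 2 ≤ (i:ℕ) →
      (fun ε => q ε i) =o[l] fun ε => ε := by
    intro d
    induction d with
    | zero =>
      intro i hle h2
      have hival : (i:ℕ) = m := le_antisymm (Fin.is_le i) (by omega)
      have hlast : i + 1 = 0 := by
        have hi : i = Fin.last m := by
          apply Fin.ext; simpa [Fin.val_last] using hival
        rw [hi]; exact Fin.last_add_one m
      have hi0 : i ≠ 0 := by
        intro h; rw [h] at h2; simp at h2
      exact key2 i hi0 (fun _ => 0)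
        (Eventually.of_forall fun ε => by rw [if_pos hlast]) (isLittleO_zero _ _) (h0j i h2)
    | succ d ih =>
      intro i hle h2
      by_cases hcase : m ≤ (i:ℕ) + d
      · exact ih i hcase h2
      · have hlt : (i:ℕ) < m := by omega
        have hval : ((i+1 : Fin (m+1)):ℕ) = (i:ℕ)+1 :=
          Fin.val_add_one_of_lt (by rw [Fin.lt_iff_val_lt_val, Fin.val_last]; exact hlt)
        have hne : i + 1 ≠ 0 := by
          intro h
          have := congrArg Fin.val h
          rw [hval, Fin.val_zero] at this
          omega
        have hi0 : i ≠ 0 := by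
          intro h; rw [h] at h2; simp at h2
        exact key2 i hi0 (fun ε => q ε (i+1))
          (Eventually.of_forall fun ε => by rw [if_neg hne])
          (ih (i+1) (by omega) (by omega))
          (h0j i h2)
  have hi2 : ∀ i : Fin (m+1), 2 ≤ (i:ℕ) → (fun ε => q ε i) =o[l] fun ε => ε :=
    fun i h => haux m i (by omega) h
  -- the value 1 in Fin (m+1)
  have hv1 : ((1:Fin (m+1)):ℕ) = 1 := by
    rw [Fin.val_one']; exact Nat.mod_eq_of_lt (by omega)
  have h1ne : (1:Fin (m+1)) ≠ 0 := by
    intro h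
    have := congrArg Fin.val h
    rw [hv1, Fin.val_zero] at this
    omega
  -- the successor of 1
  have hQ1o : (fun ε => if (1:Fin (m+1)) + 1 = 0 then (0:ℝ) else q ε (1+1))
      =o[l] (fun ε => ε) := by
    by_cases h : (1:Fin (m+1)) + 1 = 0
    · simp only [if_pos h]; exact isLittleO_zero _ _
    · simp only [if_neg h]
      apply hi2
      have hva : ((1+1 : Fin (m+1)):ℕ) = (1+1) % (m+1) := by rw [Fin.val_add, hv1]
      have hne0 : ((1+1 : Fin (m+1)):ℕ) ≠ 0 := by
        intro h0
        exact h (Fin.ext (by rw [h0, Fin.val_zero]))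
      rcases Nat.lt_or_ge m 2 with hm2 | hm2
      · exfalso
        have hmm : m = 1 := by omega
        subst hmm
        rw [hva] at hne0
        exact hne0 rfl
      · rw [hva, Nat.mod_eq_of_lt (by omega)]
  -- the asymptotics for q 1
  have hq1 : (fun ε => q ε 1 - (N:ℝ) * ε) =o[l] fun ε => ε := by
    rw [isLittleO_iff]
    intro c hc
    have hc4 : 0 < c/4 := by linarith
    have hδ : 0 < c/(4*(C+1)) := by positivity
    have hεb : 0 < c/(4*(C*((N:ℝ)+1)+1)) := by positivity
    filter_upwards [hmem, hpos, hTb, hTnn,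
      isLittleO_iff.1 h01 hc4, isLittleO_iff.1 hQ1o hc4,
      hdownall _ hδ, h01b, hsmallε _ hεb]
      with ε hε hp hT hTn hA hB hdn hPb hεs
    have hPε := hP ε hε
    have hqε := hstat ε hε
    rw [Real.norm_eq_abs, Real.norm_eq_abs, abs_of_pos hp]
    rw [Real.norm_eq_abs, Real.norm_eq_abs, abs_of_pos hp] at hA hB
    set T := ∑ k ∈ Finset.univ.erase (0:Fin (m+1)), q ε k with hTdef
    -- upper bound
    have hcb := col_bound (q ε) (P ε) hqε.1 hqε.2.1 hPε.1 hPε.2 hqε.2.2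
      (le_of_lt hδ) hdn 1 h1ne
    have hAu := (abs_le.1 hA).2
    have hBu : (if (1:Fin (m+1)) + 1 = 0 then (0:ℝ) else q ε (1+1)) ≤ (c/4)*ε :=
      le_trans (le_abs_self _) hB
    have h3 : (c/(4*(C+1))) * T ≤ (c/4)*ε := by
      have hd1 : (c/(4*(C+1))) * T ≤ (c/(4*(C+1))) * (C*ε) :=
        mul_le_mul_of_nonneg_left hT (le_of_lt hδ)
      have : (c/(4*(C+1))) * (C*ε) ≤ (c/4)*ε := by
        rw [div_mul_eq_mul_div, div_le_iff₀ (by positivity)]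
        nlinarith
      linarith
    have hcε : 0 ≤ c*ε := mul_nonneg hc.le hp.le
    have hupper : q ε 1 - (N:ℝ)*ε ≤ c*ε := by
      have : q ε 1 ≤ P ε 0 1 + (c/4)*ε + (c/4)*ε := by
        calc q ε 1 ≤ P ε 0 1 + (if (1:Fin (m+1)) + 1 = 0 then (0:ℝ) else q ε (1+1))
            + (c/(4*(C+1))) * T := hcb
          _ ≤ P ε 0 1 + (c/4)*ε + (c/4)*ε := by linarith
      linarith
    -- lower bound
    have hq0eq : q ε 0 = 1 - T := by
      have h2 := Finset.sum_erase_add univ (q ε) (mem_univ (0:Fin (m+1)))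
      rw [hqε.2.1] at h2
      rw [hTdef]; linarith
    have hlow0 : q ε 0 * P ε 0 1 ≤ q ε 1 := by
      rw [← hqε.2.2 1]
      exact Finset.single_le_sum
        (fun k _ => mul_nonneg (hqε.1 k) (hPε.1 k 1)) (mem_univ (0:Fin (m+1)))
    have hTP : T * P ε 0 1 ≤ (c/4)*ε := by
      have h1 : T * P ε 0 1 ≤ (C*ε) * (((N:ℝ)+1)*ε) := by
        apply mul_le_mul hT hPb (hPε.1 0 1) (by positivity)
      have h4 : ε * (4*(C*((N:ℝ)+1)+1)) < c := (lt_div_iff₀ (by positivity)).1 hεs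
      have hexpand : ε * (4*(C*((N:ℝ)+1)+1)) = 4*((C*((N:ℝ)+1))*ε) + 4*ε := by ring
      rw [hexpand] at h4
      have h5 : (C*((N:ℝ)+1))*ε ≤ c/4 := by linarith
      have h6 := mul_le_mul_of_nonneg_right h5 hp.le
      have h2 : (C*ε) * (((N:ℝ)+1)*ε) ≤ (c/4)*ε := by
        calc (C*ε) * (((N:ℝ)+1)*ε) = ((C*((N:ℝ)+1))*ε)*ε := by ring
          _ ≤ (c/4)*ε := h6
      linarith
    have hAl := (abs_le.1 hA).1
    have hlower : -(c*ε) ≤ q ε 1 - (N:ℝ)*ε := by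
      have hq1low : (1 - T) * P ε 0 1 ≤ q ε 1 := by rw [← hq0eq]; exact hlow0
      have hexp : (1 - T) * P ε 0 1 = P ε 0 1 - T * P ε 0 1 := by ring
      linarith
    rw [abs_le]
    exact ⟨hlower, hupper⟩
  -- the asymptotics for q 0
  have h1mem : (1:Fin (m+1)) ∈ univ.erase (0:Fin (m+1)) :=
    Finset.mem_erase.2 ⟨h1ne, mem_univ _⟩
  have hq0 : (fun ε => q ε 0 - (1 - (N:ℝ)*ε)) =o[l] fun ε => ε := by
    have hsum : (fun ε => -((q ε 1 - (N:ℝ)*ε)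
        + ∑ i ∈ (univ.erase (0:Fin (m+1))).erase 1, q ε i))
        =ᶠ[l] (fun ε => q ε 0 - (1 - (N:ℝ)*ε)) := by
      filter_upwards [hmem] with ε hε
      have h1 := (hstat ε hε).2.1
      have h2 := Finset.sum_erase_add univ (q ε) (mem_univ (0:Fin (m+1)))
      have h3 := Finset.sum_erase_add (univ.erase (0:Fin (m+1))) (q ε) h1mem
      rw [h1] at h2
      linarith
    refine IsLittleO.congr' ?_ hsum (EventuallyEq.refl _ _)
    refine IsLittleO.neg_left ?_
    refine IsLittleO.add hq1 ?_
    rw [show (fun ε => ∑ i ∈ (univ.erase (0:Fin (m+1))).erase 1, q ε i) = ∑ i ∈ (univ.erase (0:Fin (m+1))).erase 1, (fun ε => q ε i) from by ext ε; simp [Finset.sum_apply]]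
    refine IsLittleO.sum fun i hi => ?_
    have hmi := Finset.mem_erase.1 hi
    have hmi2 := Finset.mem_erase.1 hmi.2
    have h2i : 2 ≤ (i:ℕ) := by
      have hne1 : (i:ℕ) ≠ 1 := fun h => hmi.1 (Fin.ext (by rw [h, hv1]))
      have hne0 : (i:ℕ) ≠ 0 := fun h => hmi2.1 (Fin.ext (by rw [h, Fin.val_zero]))
      omega
    exact hi2 i h2i
  exact ⟨hq0, hq1, hi2⟩
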